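/- For the 63×63 quasi-cyclic matrix whose row i has support {i, i+1, i+6} mod 63 (from polynomial 1 + x + x⁶), the sets S_l = {l + 7j : 0 ≤ j ≤ 8} for l = 0,…,6 form a layer decomposition into 7 layers, and moreover for each l, S_l ∪ S_{(l+3) mod 7} is itself a valid layer (any two rows in the union have disjoint supports). -/
import Mathlib

/-- For the 63×63 quasi-cyclic matrix with row supports {i, i+1, i+6} mod 63,
the residue classes S_l = {r : r ≡ l mod 7} form a 7-layer decomposition, and
each union S_l ∪ S_{l+3} is still a valid layer. -/
theorem b1_base_layers :
    ∀ s : Fin 63 → Finset (Fin 63), (∀ i, s i = {i, i + 1, i + 6}) →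
    ∀ S : Fin 7 → Finset (Fin 63),
      (∀ l, S l = Finset.univ.filter fun r : Fin 63 => (r : ℕ) % 7 = (l : ℕ)) →
    (∀ r : Fin 63, ∃! l, r ∈ S l) ∧
    (∀ l, ∀ i ∈ S l, ∀ j ∈ S l, i ≠ j → Disjoint (s i) (s j)) ∧
    (∀ l, ∀ i ∈ S l ∪ S (l + 3), ∀ j ∈ S l ∪ S (l + 3), i ≠ j →
      Disjoint (s i) (s j)) := by
  intro s hs S hS
  have hs' : s = fun i => {i, i + 1, i + 6} := funext hs
  have hS' : S = fun l : Fin 7 => Finset.univ.filter fun r : Fin 63 => (r : ℕ) % 7 = (l : ℕ) :=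
    funext hS
  subst hs' hS'
  beta_reduce
  simp only [ExistsUnique, Finset.disjoint_iff_inter_eq_empty, Finset.mem_filter, Finset.mem_union, Finset.mem_insert, Finset.mem_singleton, Finset.mem_univ, true_and]
  decide
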